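/- Let φ : ℝ → ℝ₊ be an even log-concave function with ∫_ℝ φ = 1. Then for all t ∈ ℝ, (∫_{|t|}^{∞} u·φ(u) du)/φ(t) ≤ |t|/(2φ(0)) + 1/(4φ(0)²). Equality holds for every t when φ(u) = (λ/2)·e^{−λ|u|} for some λ > 0. -/

import Mathlib

open MeasureTheory Real
open scoped ENNReal

noncomputable section

/-- A nonnegative function is log-concave: `ρ(ax+by) ≥ ρ(x)^a ρ(y)^b` for convex
combinations. This is equivalent to the positivity set being convex with `-log ρ`
convex on it. -/
def LogConcaveFun {V : Type*} [AddCommMonoid V] [Module ℝ V] (ρ : V → ℝ) : Prop :=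
  (∀ x, 0 ≤ ρ x) ∧ ∀ x y : V, ∀ a b : ℝ, 0 ≤ a → 0 ≤ b → a + b = 1 →
    ρ x ^ a * ρ y ^ b ≤ ρ (a • x + b • y)

variable {E : Type*} [NormedAddCommGroup E] [InnerProductSpace ℝ E] [CompleteSpace E]
  [MeasurableSpace E]

/-- The variance `∫ (f - E)² dμ` (with `E = (∫ f dμ)/μ(univ)`), as an extended real. -/
def eVar (μ : Measure E) (f : E → ℝ) : ℝ≥0∞ :=
  ∫⁻ x, ENNReal.ofReal ((f x - (∫ y, f y ∂μ) / (μ Set.univ).toReal) ^ 2) ∂μ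

/-- The Dirichlet energy `∫ |∇f|² dμ`, as an extended real. -/
def eEnergy (μ : Measure E) (f : E → ℝ) : ℝ≥0∞ :=
  ∫⁻ x, ENNReal.ofReal (‖gradient f x‖ ^ 2) ∂μ

/-- The Poincaré constant of a measure: the least `C` such that
`Var_μ(f) ≤ C ∫ |∇f|² dμ` for every locally Lipschitz `f ∈ L²(μ)`. -/
def poincareConst (μ : Measure E) : ℝ≥0∞ :=
  sInf {C : ℝ≥0∞ | ∀ f : E → ℝ, LocallyLipschitz f → MemLp f 2 μ →
    eVar μ f ≤ C * eEnergy μ f}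

open Set Filter


lemma aux_deriv (c : ℝ) (hc : 0 < c) (x : ℝ) :
    HasDerivAt (fun u : ℝ => -((u/c + 1/c^2) * Real.exp (-(c*u)))) (x * Real.exp (-(c*x))) x := by
  have h1 : HasDerivAt (fun u : ℝ => u/c + 1/c^2) (1/c) x := by
    exact ((hasDerivAt_id x).div_const c).add_const (1/c^2)
  have h2 : HasDerivAt (fun u : ℝ => Real.exp (-(c*u))) (-c * Real.exp (-(c*x))) x := by
    have := ((hasDerivAt_id x).const_mul c).neg.exp
    simpa [mul_comm] using this
  have := (h1.mul h2).neg
  refine this.congr_deriv ?_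
  field_simp
  ring

lemma aux_tendsto (c : ℝ) (hc : 0 < c) :
    Tendsto (fun u : ℝ => -((u/c + 1/c^2) * Real.exp (-(c*u)))) atTop (nhds 0) := by
  have h0 : Tendsto (fun x : ℝ => c * x) atTop atTop :=
    Filter.Tendsto.const_mul_atTop hc tendsto_id
  have h1 : Tendsto (fun x : ℝ => x * Real.exp (-x)) atTop (nhds 0) := by
    simpa using tendsto_pow_mul_exp_neg_atTop_nhds_zero 1
  have h2 : Tendsto (fun u : ℝ => (c*u) * Real.exp (-(c*u))) atTop (nhds 0) := h1.comp h0
  have h3 : Tendsto (fun u : ℝ => Real.exp (-(c*u))) atTop (nhds 0) :=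
    tendsto_exp_neg_atTop_nhds_zero.comp h0
  have := ((h2.const_mul (1/c^2)).add (h3.const_mul (1/c^2))).neg
  simp only [mul_zero, add_zero, neg_zero, mul_add] at this ⊢
  convert this using 2 with u
  field_simp

lemma mul_exp_tail (c s : ℝ) (hc : 0 < c) (hs : 0 ≤ s) :
    ∫ u in Set.Ioi s, u * Real.exp (-(c*u)) = (s/c + 1/c^2) * Real.exp (-(c*s)) := by
  have := integral_Ioi_of_hasDerivAt_of_nonneg' (a := s)
    (fun x _ => aux_deriv c hc x)
    (fun x hx => mul_nonneg (hs.trans hx.le) (Real.exp_pos _).le) (aux_tendsto c hc)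
  simpa using this

lemma mul_exp_tail_integrable (c s : ℝ) (hc : 0 < c) (hs : 0 ≤ s) :
    IntegrableOn (fun u => u * Real.exp (-(c*u))) (Set.Ioi s) := by
  exact integrableOn_Ioi_deriv_of_nonneg' (fun x _ => aux_deriv c hc x)
    (fun x hx => mul_nonneg (hs.trans hx.le) (Real.exp_pos _).le) (aux_tendsto c hc)

lemma exp_tail (c s : ℝ) (hc : 0 < c) :
    ∫ u in Set.Ioi s, Real.exp (-(c*u)) = Real.exp (-(c*s)) / c := by
  have hd : ∀ x : ℝ, HasDerivAt (fun u : ℝ => -(Real.exp (-(c*u)) / c)) (Real.exp (-(c*x))) x := by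
    intro x
    have := (((hasDerivAt_id x).const_mul c).neg.exp.div_const c).neg
    refine this.congr_deriv ?_
    field_simp
    rfl
  have h0 : Tendsto (fun x : ℝ => c * x) atTop atTop :=
    Filter.Tendsto.const_mul_atTop hc tendsto_id
  have h3 : Tendsto (fun u : ℝ => -(Real.exp (-(c*u)) / c)) atTop (nhds 0) := by
    have := ((tendsto_exp_neg_atTop_nhds_zero.comp h0).div_const c).neg
    simpa using this
  have := integral_Ioi_of_hasDerivAt_of_nonneg' (a := s)
    (fun x _ => hd x) (fun x _ => (Real.exp_pos _).le) h3
  simpa using this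

lemma exp_tail_integrable (c s : ℝ) (hc : 0 < c) :
    IntegrableOn (fun u => Real.exp (-(c*u))) (Set.Ioi s) := by
  simpa [neg_mul] using exp_neg_integrableOn_Ioi s hc


lemma lc_le_max {φ : ℝ → ℝ} (hlc : LogConcaveFun φ) (heven : ∀ t, φ (-t) = φ t) (x : ℝ) :
    φ x ≤ φ 0 := by
  have h := hlc.2 x (-x) (1/2) (1/2) (by norm_num) (by norm_num) (by norm_num)
  have hx : ((1:ℝ)/2) • x + ((1:ℝ)/2) • (-x) = 0 := by
    simp only [smul_eq_mul, smul_neg, mul_neg]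
    ring
  rw [hx, heven] at h
  calc φ x = φ x ^ ((1:ℝ)/2) * φ x ^ ((1:ℝ)/2) := by
        rw [← Real.rpow_add' (hlc.1 x) (by norm_num)]; norm_num
    _ ≤ φ 0 := h

lemma lc_lower {φ : ℝ → ℝ} (hlc : LogConcaveFun φ) {v w : ℝ} (hw : 0 < w)
    (hv0 : 0 ≤ v) (hvw : v ≤ w) :
    φ 0 ^ ((w - v)/w) * φ w ^ (v/w) ≤ φ v := by
  have h := hlc.2 0 w ((w - v)/w) (v/w) (div_nonneg (by linarith) hw.le)
    (div_nonneg hv0 hw.le) (by field_simp; ring)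
  have : ((w - v)/w) • (0:ℝ) + (v/w) • w = v := by
    rw [smul_eq_mul, smul_eq_mul]
    field_simp
    ring
  rwa [this] at h

/-- once below the exponential at `w > 0`, the ratio keeps decaying -/
lemma cross_after {φ : ℝ → ℝ} (hlc : LogConcaveFun φ) (hp : 0 < φ 0) {w u : ℝ}
    (hw : 0 < w) (hwu : w ≤ u)
    (h : φ w ≤ φ 0 * Real.exp (-(2 * φ 0 * w))) :
    φ u ≤ Real.exp (-(2 * φ 0 * (u - w))) * φ w := by
  set p := φ 0 with hpdef
  have hu : 0 < u := hw.trans_le hwu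
  have key := lc_lower hlc hu (le_of_lt hw) hwu  -- p^((u-w)/u) * φ u ^(w/u) ≤ φ w
  rcases (hlc.1 u).eq_or_lt with hφu | hφu
  · exact le_trans (le_of_eq hφu.symm) (mul_nonneg (Real.exp_pos _).le (hlc.1 w))
  rcases (hlc.1 w).eq_or_lt with hφw | hφw
  · -- φ w = 0 forces φ u = 0, contradiction with hφu
    exfalso
    have h1 : 0 < p ^ ((u - w)/u) * φ u ^ (w/u) :=
      mul_pos (Real.rpow_pos_of_pos hp _) (Real.rpow_pos_of_pos hφu _)
    rw [← hφw] at key; linarith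
  -- main case
  have hbase : (p ^ ((u - w)/u) * φ u ^ (w/u)) ^ (u/w) ≤ φ w ^ (u/w) :=
    Real.rpow_le_rpow (mul_nonneg (Real.rpow_nonneg hp.le _) (Real.rpow_nonneg (hlc.1 u) _))
      key (div_nonneg hu.le hw.le)
  have e1 : (p ^ ((u - w)/u) * φ u ^ (w/u)) ^ (u/w)
      = p ^ ((u - w)/w) * φ u := by
    rw [Real.mul_rpow (Real.rpow_nonneg hp.le _) (Real.rpow_nonneg (hlc.1 u) _),
      ← Real.rpow_mul hp.le, ← Real.rpow_mul (hlc.1 u)]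
    have : (w/u) * (u/w) = 1 := by field_simp
    rw [this, Real.rpow_one]
    congr 2
    field_simp
  have e2 : φ w ^ (u/w) = φ w ^ ((u - w)/w) * φ w := by
    have h' : u/w = (u - w)/w + 1 := by field_simp; ring
    rw [h', Real.rpow_add hφw, Real.rpow_one]
  have e3 : φ w ^ ((u - w)/w) ≤ p ^ ((u - w)/w) * Real.exp (-(2 * p * (u - w))) := by
    calc φ w ^ ((u - w)/w) ≤ (p * Real.exp (-(2 * p * w))) ^ ((u - w)/w) :=
          Real.rpow_le_rpow (hlc.1 w) h (div_nonneg (by linarith) hw.le)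
      _ = p ^ ((u - w)/w) * Real.exp (-(2 * p * (u - w))) := by
          rw [Real.mul_rpow hp.le (Real.exp_pos _).le, ← Real.exp_mul]
          congr 2
          field_simp
  have hppos : 0 < p ^ ((u - w)/w) := Real.rpow_pos_of_pos hp _
  have : p ^ ((u - w)/w) * φ u ≤ p ^ ((u - w)/w) * (Real.exp (-(2 * p * (u - w))) * φ w) := by
    rw [e1] at hbase
    rw [e2] at hbase
    calc p ^ ((u - w)/w) * φ u ≤ φ w ^ ((u - w)/w) * φ w := hbase
      _ ≤ (p ^ ((u - w)/w) * Real.exp (-(2 * p * (u - w)))) * φ w :=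
          mul_le_mul_of_nonneg_right e3 (hlc.1 w)
      _ = p ^ ((u - w)/w) * (Real.exp (-(2 * p * (u - w))) * φ w) := by ring
  exact le_of_mul_le_mul_left this hppos

/-- above the exponential at `w > 0` imples above it on `[0, w]` -/
lemma cross_before {φ : ℝ → ℝ} (hlc : LogConcaveFun φ) (hp : 0 < φ 0) {w v : ℝ}
    (hw : 0 < w) (h : φ 0 * Real.exp (-(2 * φ 0 * w)) ≤ φ w)
    (hv0 : 0 ≤ v) (hvw : v ≤ w) :
    φ 0 * Real.exp (-(2 * φ 0 * v)) ≤ φ v := by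
  set p := φ 0 with hpdef
  have key := lc_lower hlc hw hv0 hvw
  calc p * Real.exp (-(2 * p * v))
      = p ^ ((w - v)/w) * (p * Real.exp (-(2 * p * w))) ^ (v/w) := by
        rw [Real.mul_rpow hp.le (Real.exp_pos _).le, ← Real.exp_mul]
        rw [show -(2*p*w) * (v/w) = -(2*p*v) by field_simp]
        rw [← mul_assoc, ← Real.rpow_add hp]
        rw [show (w - v)/w + v/w = 1 by field_simp; ring, Real.rpow_one]
    _ ≤ p ^ ((w - v)/w) * φ w ^ (v/w) := by
        refine mul_le_mul_of_nonneg_left ?_ (Real.rpow_nonneg hp.le _)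
        exact Real.rpow_le_rpow (mul_nonneg hp.le (Real.exp_pos _).le) h
          (div_nonneg hv0 hw.le)
    _ ≤ φ v := key

lemma psi_mul_tail (p r : ℝ) (hp : 0 < p) (hr : 0 ≤ r) :
    ∫ u in Set.Ioi r, u * (p * Real.exp (-(2*p*u)))
      = (p * Real.exp (-(2*p*r))) * (r/(2*p) + 1/(4*p^2)) := by
  have h : ∀ u : ℝ, u * (p * Real.exp (-(2*p*u))) = p * (u * Real.exp (-(2*p*u))) :=
    fun u => by ring
  simp_rw [h]
  rw [integral_const_mul, mul_exp_tail (2*p) r (by positivity) hr]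
  field_simp
  ring

lemma psi_mul_tail_integrable (p r : ℝ) (hp : 0 < p) (hr : 0 ≤ r) :
    IntegrableOn (fun u => u * (p * Real.exp (-(2*p*u)))) (Set.Ioi r) := by
  have := (mul_exp_tail_integrable (2*p) r (by positivity) hr).const_mul p
  exact this.congr (ae_of_all _ fun u => by ring)

theorem tail_moment_ratio_bound (φ : ℝ → ℝ)
    (hlc : LogConcaveFun φ) (heven : ∀ t, φ (-t) = φ t)
    (hint : ∫ t, φ t = 1) :
    (∀ t : ℝ, (∫ u in Set.Ioi |t|, u * φ u) / φ t ≤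
        |t| / (2 * φ 0) + 1 / (4 * φ 0 ^ 2)) ∧
      ∀ l : ℝ, 0 < l → (∀ u, φ u = l / 2 * Real.exp (-(l * |u|))) →
        ∀ t : ℝ, (∫ u in Set.Ioi |t|, u * φ u) / φ t =
          |t| / (2 * φ 0) + 1 / (4 * φ 0 ^ 2) := by
  constructor
  · intro t
    set p := φ 0 with hpdef
    have hφ0 : ∀ x, 0 ≤ φ x := hlc.1
    have hmax : ∀ x, φ x ≤ p := lc_le_max hlc heven
    have hφint : Integrable φ := by
      by_contra hcon
      rw [integral_undef hcon] at hint; norm_num at hint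
    have hp : 0 < p := by
      rcases (hφ0 0).eq_or_lt with h0 | h0
      · exfalso
        have hz : ∀ x, φ x = 0 := fun x => le_antisymm ((hmax x).trans h0.ge) (hφ0 x)
        rw [show φ = fun _ => (0:ℝ) from funext hz] at hint
        simp at hint
      · exact h0
    have hmeasur : AEStronglyMeasurable (fun u : ℝ => u * φ u) volume :=
      aestronglyMeasurable_id.mul hφint.1
    have hhalf : ∫ u in Set.Ioi (0:ℝ), φ u = 1/2 := by
      have habs : (fun x : ℝ => φ |x|) = φ := by
        funext x
        rcases abs_cases x with ⟨h1, _⟩ | ⟨h1, _⟩ <;> rw [h1]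
        exact heven x
      have h2 : ∫ x : ℝ, φ |x| = 1 := by rw [habs]; exact hint
      rw [integral_comp_abs] at h2
      linarith
    have hψint : ∀ r : ℝ, IntegrableOn (fun u => p * Real.exp (-(2*p*u))) (Set.Ioi r) :=
      fun r => (exp_tail_integrable (2*p) r (by positivity)).const_mul p
    have hψ0 : ∫ u in Set.Ioi (0:ℝ), p * Real.exp (-(2*p*u)) = 1/2 := by
      rw [integral_const_mul, exp_tail (2*p) 0 (by positivity)]
      norm_num
      field_simp
    set s := |t| with hsdef
    have hs : 0 ≤ s := abs_nonneg t
    have hφts : φ t = φ s := by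
      rcases abs_cases t with ⟨h1, _⟩ | ⟨h1, _⟩
      · rw [hsdef, h1]
      · rw [hsdef, h1, heven]
    have hR : 0 ≤ s/(2*p) + 1/(4*p^2) := by positivity
    rw [hφts]
    show (∫ u in Set.Ioi s, u * φ u) / φ s ≤ s / (2 * p) + 1 / (4 * p ^ 2)
    suffices key : (∫ u in Set.Ioi s, u * φ u) ≤ φ s * (s/(2*p) + 1/(4*p^2)) by
      rcases (hφ0 s).eq_or_lt with h0 | h0
      · rw [← h0, div_zero]; exact hR
      · rw [div_le_iff₀ h0]; linarith
    rcases lt_or_ge (φ s) (p * Real.exp (-(2*p*s))) with hca | hcb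
    · -- below the exponential at s
      have hs0 : 0 < s := by
        rcases hs.eq_or_lt with h0 | h0
        · exfalso; rw [← h0] at hca; simp [hpdef] at hca
        · exact h0
      have hbound : ∀ u ∈ Set.Ioi s, u * φ u ≤ u * (Real.exp (-(2*p*(u - s))) * φ s) := by
        intro u hu
        exact mul_le_mul_of_nonneg_left (cross_after hlc hp hs0 (le_of_lt hu) hca.le)
          (le_of_lt (hs0.trans hu))
      have heq : ∀ u : ℝ, u * (Real.exp (-(2*p*(u - s))) * φ s)
          = (u * Real.exp (-(2*p*u))) * (Real.exp (2*p*s) * φ s) := by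
        intro u
        rw [show -(2*p*(u - s)) = -(2*p*u) + 2*p*s by ring, Real.exp_add]
        ring
      have hgint : IntegrableOn (fun u => u * (Real.exp (-(2*p*(u - s))) * φ s)) (Set.Ioi s) := by
        have h1 := (mul_exp_tail_integrable (2*p) s (by positivity) hs).mul_const
          (Real.exp (2*p*s) * φ s)
        exact h1.congr (ae_of_all _ fun u => (heq u).symm)
      have hfint : IntegrableOn (fun u => u * φ u) (Set.Ioi s) := by
        refine Integrable.mono hgint hmeasur.restrict ?_
        rw [ae_restrict_iff' measurableSet_Ioi]
        refine ae_of_all _ fun u hu => ?_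
        have hu0 : (0:ℝ) ≤ u := (hs0.trans hu).le
        rw [Real.norm_eq_abs, Real.norm_eq_abs, abs_of_nonneg (mul_nonneg hu0 (hφ0 u)),
          abs_of_nonneg (mul_nonneg hu0 (mul_nonneg (Real.exp_pos _).le (hφ0 s)))]
        exact hbound u hu
      calc (∫ u in Set.Ioi s, u * φ u)
          ≤ ∫ u in Set.Ioi s, u * (Real.exp (-(2*p*(u - s))) * φ s) :=
            setIntegral_mono_on hfint hgint measurableSet_Ioi hbound
        _ = ∫ u in Set.Ioi s, (u * Real.exp (-(2*p*u))) * (Real.exp (2*p*s) * φ s) :=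
            setIntegral_congr_fun measurableSet_Ioi fun u _ => heq u
        _ = ((s/(2*p) + 1/(2*p)^2) * Real.exp (-(2*p*s))) * (Real.exp (2*p*s) * φ s) := by
            rw [integral_mul_const, mul_exp_tail (2*p) s (by positivity) hs]
        _ = φ s * (s/(2*p) + 1/(4*p^2)) := by
            rw [show ((s/(2*p) + 1/(2*p)^2) * Real.exp (-(2*p*s))) * (Real.exp (2*p*s) * φ s)
              = (Real.exp (-(2*p*s)) * Real.exp (2*p*s)) * ((s/(2*p) + 1/(2*p)^2) * φ s) by ring,
              ← Real.exp_add]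
            norm_num
            ring_nf
    · -- above the exponential at s
      have hφs : 0 < φ s := lt_of_lt_of_le (by positivity) hcb
      set S : Set ℝ := {u | 0 ≤ u ∧ p * Real.exp (-(2*p*u)) ≤ φ u} with hSdef
      have hsS : s ∈ S := ⟨hs, hcb⟩
      by_cases hbdd : BddAbove S
      · -- bounded case
        set a := sSup S with hadef
        have haS : s ≤ a := le_csSup hbdd hsS
        have ha0 : 0 ≤ a := hs.trans haS
        have hbefore : ∀ u, 0 < u → u < a → p * Real.exp (-(2*p*u)) ≤ φ u := by
          intro u hu hua
          obtain ⟨w, hwS, hw⟩ := exists_lt_of_lt_csSup ⟨s, hsS⟩ hua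
          exact cross_before hlc hp (hu.trans hw) hwS.2 hu.le hw.le
        have hafter : ∀ u, a < u → φ u ≤ p * Real.exp (-(2*p*u)) := by
          intro u hu
          by_contra hcon; push_neg at hcon
          exact absurd (le_csSup hbdd ⟨ha0.trans hu.le, hcon.le⟩) (not_le.2 hu)
        have hII : Set.Ioi (0:ℝ) ∩ Set.Ioi s = Set.Ioi s := by
          ext x
          simp only [Set.mem_inter_iff, Set.mem_Ioi]
          exact ⟨fun h => h.2, fun h => ⟨lt_of_le_of_lt hs h, h⟩⟩
        have hmass : ∫ u in Set.Ioi s, φ u ≤ ∫ u in Set.Ioi s, p * Real.exp (-(2*p*u)) := by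
          have hgints : IntegrableOn (fun u => p * Real.exp (-(2*p*u)) - φ u) (Set.Ioi s) :=
            (hψint s).sub hφint.integrableOn
          have hgint0 : IntegrableOn (fun u => p * Real.exp (-(2*p*u)) - φ u) (Set.Ioi 0) :=
            (hψint 0).sub hφint.integrableOn
          have hindint : IntegrableOn
              ((Set.Ioi s).indicator fun u => p * Real.exp (-(2*p*u)) - φ u) (Set.Ioi 0) :=
            (hgints.integrable_indicator measurableSet_Ioi).integrableOn
          have hmono : ∀ u ∈ Set.Ioi (0:ℝ), p * Real.exp (-(2*p*u)) - φ u
              ≤ (Set.Ioi s).indicator (fun u => p * Real.exp (-(2*p*u)) - φ u) u := by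
            intro u hu
            by_cases hus : u ∈ Set.Ioi s
            · rw [Set.indicator_of_mem hus]
            · rw [Set.indicator_of_notMem hus]
              have hule : u ≤ s := not_lt.1 hus
              have h2 := cross_before hlc hp (lt_of_lt_of_le hu hule) hcb (le_of_lt hu) hule
              linarith
          have h2 := setIntegral_mono_on hgint0 hindint measurableSet_Ioi hmono
          have h3 : ∫ u in Set.Ioi (0:ℝ), (p * Real.exp (-(2*p*u)) - φ u) = 0 := by
            rw [integral_sub (hψint 0) hφint.integrableOn, hhalf, hψ0]
            ring
          have h4 : ∫ u in Set.Ioi (0:ℝ),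
              (Set.Ioi s).indicator (fun u => p * Real.exp (-(2*p*u)) - φ u) u
              = ∫ u in Set.Ioi s, (p * Real.exp (-(2*p*u)) - φ u) := by
            rw [setIntegral_indicator measurableSet_Ioi, hII]
          have h5 : ∫ u in Set.Ioi s, (p * Real.exp (-(2*p*u)) - φ u)
              = (∫ u in Set.Ioi s, p * Real.exp (-(2*p*u))) - ∫ u in Set.Ioi s, φ u :=
            integral_sub (hψint s) hφint.integrableOn
          linarith
        have hpoint : ∀ u ∈ Set.Ioi s,
            u * φ u - u * (p * Real.exp (-(2*p*u)))
              ≤ a * φ u - a * (p * Real.exp (-(2*p*u))) := by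
          intro u hu
          rcases lt_trichotomy u a with h | h | h
          · have h1 := hbefore u (lt_of_le_of_lt hs hu) h
            nlinarith
          · rw [h]
          · have h1 := hafter u h
            nlinarith
        have hint1 : IntegrableOn (fun u => u * φ u) (Set.Ioc s a) := by
          refine Integrable.mono (g := fun _ : ℝ => a * p)
            (integrableOn_const measure_Ioc_lt_top.ne) hmeasur.restrict ?_
          rw [ae_restrict_iff' measurableSet_Ioc]
          refine ae_of_all _ fun u hu => ?_
          have hu0 : (0:ℝ) ≤ u := hs.trans hu.1.le
          rw [Real.norm_eq_abs, Real.norm_eq_abs, abs_of_nonneg (mul_nonneg hu0 (hφ0 u)),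
            abs_of_nonneg (mul_nonneg ha0 hp.le)]
          exact mul_le_mul hu.2 (hmax u) (hφ0 u) ha0
        have hint2 : IntegrableOn (fun u => u * φ u) (Set.Ioi a) := by
          refine Integrable.mono (psi_mul_tail_integrable p a hp ha0) hmeasur.restrict ?_
          rw [ae_restrict_iff' measurableSet_Ioi]
          refine ae_of_all _ fun u hu => ?_
          have hu0 : (0:ℝ) ≤ u := ha0.trans (le_of_lt hu)
          rw [Real.norm_eq_abs, Real.norm_eq_abs, abs_of_nonneg (mul_nonneg hu0 (hφ0 u)),
            abs_of_nonneg (mul_nonneg hu0 (by positivity))]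
          exact mul_le_mul_of_nonneg_left (hafter u hu) hu0
        have hfint : IntegrableOn (fun u => u * φ u) (Set.Ioi s) := by
          have h1 := hint1.union hint2
          have hunion : Set.Ioc s a ∪ Set.Ioi a = Set.Ioi s := by
            ext x
            simp only [Set.mem_union, Set.mem_Ioc, Set.mem_Ioi]
            constructor
            · rintro (⟨h1, _⟩ | h1)
              · exact h1
              · exact lt_of_le_of_lt haS h1
            · intro hx
              rcases le_or_gt x a with h | h
              · exact Or.inl ⟨hx, h⟩
              · exact Or.inr h
          rwa [hunion] at h1
        have hgint := psi_mul_tail_integrable p s hp hs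
        have hsm := setIntegral_mono_on (hfint.sub hgint)
          ((hφint.integrableOn.const_mul a).sub ((hψint s).const_mul a))
          measurableSet_Ioi hpoint
        simp only [Pi.sub_apply] at hsm
        rw [integral_sub hfint hgint,
          integral_sub (hφint.integrableOn.const_mul a) ((hψint s).const_mul a),
          integral_const_mul, integral_const_mul] at hsm
        have h2 : ∫ u in Set.Ioi s, u * φ u
            ≤ ∫ u in Set.Ioi s, u * (p * Real.exp (-(2*p*u))) := by
          nlinarith [mul_nonneg ha0 (sub_nonneg.2 hmass)]
        rw [psi_mul_tail p s hp hs] at h2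
        exact le_trans h2 (mul_le_mul_of_nonneg_right hcb hR)
      · -- unbounded case: φ coincides a.e. with the exponential
        have hae : ∀ u, 0 < u → p * Real.exp (-(2*p*u)) ≤ φ u := by
          intro u hu
          obtain ⟨w, hwS, hw⟩ := not_bddAbove_iff.1 hbdd u
          exact cross_before hlc hp (hu.trans hw) hwS.2 hu.le hw.le
        have hsub0 : ∫ u in Set.Ioi (0:ℝ), (φ u - p * Real.exp (-(2*p*u))) = 0 := by
          rw [integral_sub hφint.integrableOn (hψint 0), hhalf, hψ0]
          ring
        have hnn : 0 ≤ᵐ[volume.restrict (Set.Ioi (0:ℝ))]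
            fun u => φ u - p * Real.exp (-(2*p*u)) := by
          rw [EventuallyLE, ae_restrict_iff' measurableSet_Ioi]
          exact ae_of_all _ fun u hu => sub_nonneg.2 (hae u hu)
        have haeeq := (integral_eq_zero_iff_of_nonneg_ae hnn
          (hφint.integrableOn.sub (hψint 0))).1 hsub0
        have haeeq' : ∀ᵐ u ∂volume.restrict (Set.Ioi s),
            φ u - p * Real.exp (-(2*p*u)) = 0 :=
          ae_restrict_of_ae_restrict_of_subset (Set.Ioi_subset_Ioi hs) haeeq
        have hcongr : ∫ u in Set.Ioi s, u * φ u
            = ∫ u in Set.Ioi s, u * (p * Real.exp (-(2*p*u))) := by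
          apply integral_congr_ae
          filter_upwards [haeeq'] with u hu
          have : φ u = p * Real.exp (-(2*p*u)) := by linarith [hu]
          rw [this]
        rw [hcongr, psi_mul_tail p s hp hs]
        exact mul_le_mul_of_nonneg_right hcb hR
  · -- equality case
    intro l hl hφl t
    have hl0 : l ≠ 0 := ne_of_gt hl
    set s := |t| with hsdef
    have hs : 0 ≤ s := abs_nonneg t
    have hφ00 : φ 0 = l/2 := by rw [hφl 0]; simp
    have hφt : φ t = l/2 * Real.exp (-(l*s)) := hφl t
    have hcong : ∫ u in Set.Ioi s, u * φ u
        = ∫ u in Set.Ioi s, (l/2) * (u * Real.exp (-(l*u))) := by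
      refine setIntegral_congr_fun measurableSet_Ioi fun u hu => ?_
      rw [hφl u, abs_of_nonneg (le_of_lt (lt_of_le_of_lt hs hu))]
      ring
    rw [hcong, integral_const_mul, mul_exp_tail l s hl hs, hφt, hφ00]
    have hexp : Real.exp (-(l*s)) ≠ 0 := (Real.exp_pos _).ne'
    field_simp
    ring
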